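/- For any natural number n ≥ 4 and any two vertices (a₁,a₂,a₃), (b₁,b₂,b₃) of the cubical staircase graph CS_n, the graph distance between them equals |a₁−b₁| + |a₂−b₂| + |a₃−b₃|. -/

import Mathlib

open SimpleGraph Finset

/-- The `k`-token graph of a graph `G`: vertices are `k`-element subsets of the vertex set,
two subsets adjacent iff their symmetric difference is `{x, y}` with `xy` an edge of `G`. -/
def tokenGraph {V : Type*} [DecidableEq V] (G : SimpleGraph V) (k : ℕ) :
    SimpleGraph {s : Finset V // s.card = k} where
  Adj A B := ∃ x y, G.Adj x y ∧ symmDiff A.1 B.1 = {x, y}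
  symm := by
    constructor
    rintro A B ⟨x, y, hxy, h⟩
    exact ⟨x, y, hxy, by rwa [symmDiff_comm]⟩
  loopless := by
    constructor
    rintro A ⟨x, y, hxy, h⟩
    rw [symmDiff_self] at h
    exact (Finset.insert_nonempty x {y}).ne_empty (by simpa using h.symm)

/-- Vertex set of the cubical staircase graph `CS n` (1-indexed coordinates). -/
abbrev CSVert (n : ℕ) :=
  {v : ℕ × ℕ × ℕ // 1 ≤ v.1 ∧ v.1 ≤ n - 2 ∧ 1 ≤ v.2.1 ∧ v.2.1 ≤ v.1 ∧
    1 ≤ v.2.2 ∧ v.2.2 ≤ n - 1 - v.1}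

/-- The cubical staircase graph `CS n`: two vertices are adjacent iff they differ in exactly
one coordinate, by exactly 1. -/
def CS (n : ℕ) : SimpleGraph (CSVert n) where
  Adj a b :=
    (a.1.1 = b.1.1 ∧ a.1.2.1 = b.1.2.1 ∧ (a.1.2.2 + 1 = b.1.2.2 ∨ b.1.2.2 + 1 = a.1.2.2)) ∨
    (a.1.1 = b.1.1 ∧ a.1.2.2 = b.1.2.2 ∧ (a.1.2.1 + 1 = b.1.2.1 ∨ b.1.2.1 + 1 = a.1.2.1)) ∨
    (a.1.2.1 = b.1.2.1 ∧ a.1.2.2 = b.1.2.2 ∧ (a.1.1 + 1 = b.1.1 ∨ b.1.1 + 1 = a.1.1))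
  symm := ⟨fun a b h => by omega⟩
  loopless := ⟨fun a h => by omega⟩

/-- Disjoint union of an arbitrary family of graphs. -/
def sigmaGraph {ι : Type*} {V : ι → Type*} (G : ∀ i, SimpleGraph (V i)) :
    SimpleGraph (Σ i, V i) where
  Adj a b := ∃ (i : ι) (x y : V i), (G i).Adj x y ∧ a = ⟨i, x⟩ ∧ b = ⟨i, y⟩
  symm := by constructor; rintro a b ⟨i, x, y, h, rfl, rfl⟩; exact ⟨i, y, x, h.symm, rfl, rfl⟩
  loopless := by
    constructor
    rintro a ⟨i, x, y, h, rfl, he⟩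
    exact h.ne (by simpa using he)

lemma cs_adj {n : ℕ} (a b : CSVert n) : (CS n).Adj a b ↔
    (a.1.1 = b.1.1 ∧ a.1.2.1 = b.1.2.1 ∧ (a.1.2.2 + 1 = b.1.2.2 ∨ b.1.2.2 + 1 = a.1.2.2)) ∨
    (a.1.1 = b.1.1 ∧ a.1.2.2 = b.1.2.2 ∧ (a.1.2.1 + 1 = b.1.2.1 ∨ b.1.2.1 + 1 = a.1.2.1)) ∨
    (a.1.2.1 = b.1.2.1 ∧ a.1.2.2 = b.1.2.2 ∧ (a.1.1 + 1 = b.1.1 ∨ b.1.1 + 1 = a.1.1)) :=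
  Iff.rfl

lemma cs_lb {n : ℕ} : ∀ {a b : CSVert n} (p : (CS n).Walk a b),
    ((a.1.1 : ℤ) - b.1.1).natAbs + ((a.1.2.1 : ℤ) - b.1.2.1).natAbs +
      ((a.1.2.2 : ℤ) - b.1.2.2).natAbs ≤ p.length := by
  intro a b p
  induction p with
  | nil => simp
  | cons h p ih =>
    rw [cs_adj] at h
    rw [SimpleGraph.Walk.length_cons]
    omega

lemma cs_ub {n : ℕ} (hn : 4 ≤ n) : ∀ (m : ℕ) (a b : CSVert n),
    ((a.1.1 : ℤ) - b.1.1).natAbs + ((a.1.2.1 : ℤ) - b.1.2.1).natAbs +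
      ((a.1.2.2 : ℤ) - b.1.2.2).natAbs = m →
    ∃ p : (CS n).Walk a b, p.length = m := by
  intro m
  induction m with
  | zero =>
    intro a b h
    have hab : a = b := by
      apply Subtype.ext
      obtain ⟨⟨i, j, k⟩, ha⟩ := a
      obtain ⟨⟨i', j', k'⟩, hb⟩ := b
      simp only at h ⊢
      have : i = i' ∧ j = j' ∧ k = k' := by omega
      simp [this.1, this.2.1, this.2.2]
    subst hab
    exact ⟨SimpleGraph.Walk.nil, rfl⟩
  | succ m ih =>
    intro a b h
    obtain ⟨⟨i, j, k⟩, ha⟩ := a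
    obtain ⟨⟨i', j', k'⟩, hb⟩ := b
    dsimp only at h ha hb
    by_cases h1 : k' < k
    · refine ?_
      have hc : 1 ≤ (i : ℕ) ∧ i ≤ n - 2 ∧ 1 ≤ j ∧ j ≤ i ∧ 1 ≤ k - 1 ∧ k - 1 ≤ n - 1 - i := by
        omega
      set c : CSVert n := ⟨(i, j, k - 1), hc⟩ with hcdef
      have hadj : (CS n).Adj ⟨(i, j, k), ha⟩ c := by rw [cs_adj]; dsimp only [c]; omega
      obtain ⟨p, hp⟩ := ih c ⟨(i', j', k'), hb⟩ (by dsimp only [c]; omega)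
      exact ⟨SimpleGraph.Walk.cons hadj p, by simp [hp]⟩
    · by_cases h2 : j' < j
      · have hc : 1 ≤ (i : ℕ) ∧ i ≤ n - 2 ∧ 1 ≤ j - 1 ∧ j - 1 ≤ i ∧ 1 ≤ k ∧ k ≤ n - 1 - i := by
          omega
        set c : CSVert n := ⟨(i, j - 1, k), hc⟩ with hcdef
        have hadj : (CS n).Adj ⟨(i, j, k), ha⟩ c := by rw [cs_adj]; dsimp only [c]; omega
        obtain ⟨p, hp⟩ := ih c ⟨(i', j', k'), hb⟩ (by dsimp only [c]; omega)
        exact ⟨SimpleGraph.Walk.cons hadj p, by simp [hp]⟩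
      · by_cases h3 : i < i'
        · have hc : 1 ≤ (i + 1 : ℕ) ∧ i + 1 ≤ n - 2 ∧ 1 ≤ j ∧ j ≤ i + 1 ∧ 1 ≤ k ∧
              k ≤ n - 1 - (i + 1) := by omega
          set c : CSVert n := ⟨(i + 1, j, k), hc⟩ with hcdef
          have hadj : (CS n).Adj ⟨(i, j, k), ha⟩ c := by rw [cs_adj]; dsimp only [c]; omega
          obtain ⟨p, hp⟩ := ih c ⟨(i', j', k'), hb⟩ (by dsimp only [c]; omega)
          exact ⟨SimpleGraph.Walk.cons hadj p, by simp [hp]⟩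
        · by_cases h4 : i' < i
          · have hc : 1 ≤ (i - 1 : ℕ) ∧ i - 1 ≤ n - 2 ∧ 1 ≤ j ∧ j ≤ i - 1 ∧ 1 ≤ k ∧
                k ≤ n - 1 - (i - 1) := by omega
            set c : CSVert n := ⟨(i - 1, j, k), hc⟩ with hcdef
            have hadj : (CS n).Adj ⟨(i, j, k), ha⟩ c := by rw [cs_adj]; dsimp only [c]; omega
            obtain ⟨p, hp⟩ := ih c ⟨(i', j', k'), hb⟩ (by dsimp only [c]; omega)
            exact ⟨SimpleGraph.Walk.cons hadj p, by simp [hp]⟩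
          · by_cases h5 : j < j'
            · have hc : 1 ≤ (i : ℕ) ∧ i ≤ n - 2 ∧ 1 ≤ j + 1 ∧ j + 1 ≤ i ∧ 1 ≤ k ∧
                  k ≤ n - 1 - i := by omega
              set c : CSVert n := ⟨(i, j + 1, k), hc⟩ with hcdef
              have hadj : (CS n).Adj ⟨(i, j, k), ha⟩ c := by rw [cs_adj]; dsimp only [c]; omega
              obtain ⟨p, hp⟩ := ih c ⟨(i', j', k'), hb⟩ (by dsimp only [c]; omega)
              exact ⟨SimpleGraph.Walk.cons hadj p, by simp [hp]⟩
            · have h6 : k < k' := by omega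
              have hc : 1 ≤ (i : ℕ) ∧ i ≤ n - 2 ∧ 1 ≤ j ∧ j ≤ i ∧ 1 ≤ k + 1 ∧
                  k + 1 ≤ n - 1 - i := by omega
              set c : CSVert n := ⟨(i, j, k + 1), hc⟩ with hcdef
              have hadj : (CS n).Adj ⟨(i, j, k), ha⟩ c := by rw [cs_adj]; dsimp only [c]; omega
              obtain ⟨p, hp⟩ := ih c ⟨(i', j', k'), hb⟩ (by dsimp only [c]; omega)
              exact ⟨SimpleGraph.Walk.cons hadj p, by simp [hp]⟩

theorem stmt3 {n : ℕ} (hn : 4 ≤ n) (a b : CSVert n) :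
    (CS n).dist a b =
      ((a.1.1 : ℤ) - b.1.1).natAbs + ((a.1.2.1 : ℤ) - b.1.2.1).natAbs +
        ((a.1.2.2 : ℤ) - b.1.2.2).natAbs := by
  obtain ⟨p, hp⟩ := cs_ub hn _ a b rfl
  refine le_antisymm (hp ▸ SimpleGraph.dist_le p) ?_
  obtain ⟨q, hq⟩ := SimpleGraph.Reachable.exists_walk_length_eq_dist ⟨p⟩
  calc _ ≤ q.length := cs_lb q
    _ = _ := hq
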